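/- The map z ↦ T(z) from ℂ⁵ to rank-3 tensors is an injective ℂ-linear map whose range is exactly the set of rank-3 tensors T satisfying condition T1 (all traces vanish) and T_{ijk} = q·T_{jki} for all indices i,j,k, where q = exp(2πi/3). Consequently, that subspace of tensors has complex dimension 5. -/

import Mathlib

open Complex Matrix BigOperators Finset

noncomputable section

/-- The primitive cube root of unity `q = exp(2πi/3)`. -/
def q : ℂ := Complex.exp (2 * Real.pi * Complex.I / 3)

/-- A rank-3 tensor in 3-dimensional space. -/
abbrev Tensor3 := Fin 3 → Fin 3 → Fin 3 → ℂ

/-- Condition T1: every trace of the tensor vanishes. -/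
def CondT1 (T : Tensor3) : Prop :=
  ∀ j : Fin 3, (∑ i, T i i j = 0) ∧ (∑ i, T i j i = 0) ∧ (∑ i, T j i i = 0)

/-- Condition T2: all cyclic sums vanish. -/
def CondT2 (T : Tensor3) : Prop :=
  ∀ i j k : Fin 3, T i j k + T j k i + T k i j = 0

/-- The cyclic permutation operator `Φ_σ` on rank-3 tensors. -/
def Phi (T : Tensor3) : Tensor3 := fun i j k => T j k i

/-- Action of a real 3×3 matrix on a rank-3 tensor. -/
def gact (g : Matrix (Fin 3) (Fin 3) ℝ) (T : Tensor3) : Tensor3 :=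
  fun i j k => ∑ p, ∑ r, ∑ s, (g i p : ℂ) * (g j r : ℂ) * (g k s : ℂ) * T p r s

/-- The tensor `T(z)` associated with a point `z ∈ ℂ⁵`. -/
def Tz (z : Fin 5 → ℂ) : Tensor3 :=
  ![![![0, -(star q) * z 1 / (Real.sqrt 6 : ℂ), (star q) * z 2 / (Real.sqrt 6 : ℂ)],
     ![-q * z 1 / (Real.sqrt 6 : ℂ), z 0 / (Real.sqrt 6 : ℂ), z 3 / (Real.sqrt 3 : ℂ)],
     ![q * z 2 / (Real.sqrt 6 : ℂ), q * z 4 / (Real.sqrt 3 : ℂ), -(z 0) / (Real.sqrt 6 : ℂ)]],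
    ![![-(z 1) / (Real.sqrt 6 : ℂ), q * z 0 / (Real.sqrt 6 : ℂ), (star q) * z 4 / (Real.sqrt 3 : ℂ)],
     ![(star q) * z 0 / (Real.sqrt 6 : ℂ), 0, -(star q) * z 2 / (Real.sqrt 6 : ℂ)],
     ![(star q) * z 3 / (Real.sqrt 3 : ℂ), -q * z 2 / (Real.sqrt 6 : ℂ), z 1 / (Real.sqrt 6 : ℂ)]],
    ![![z 2 / (Real.sqrt 6 : ℂ), q * z 3 / (Real.sqrt 3 : ℂ), -q * z 0 / (Real.sqrt 6 : ℂ)],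
     ![z 4 / (Real.sqrt 3 : ℂ), -(z 2) / (Real.sqrt 6 : ℂ), q * z 1 / (Real.sqrt 6 : ℂ)],
     ![-(star q) * z 0 / (Real.sqrt 6 : ℂ), (star q) * z 1 / (Real.sqrt 6 : ℂ), 0]]]

/-- The matrix `K` of the invariant quadratic form
`K(z,z) = (z¹)² + (z²)² + (z³)² + 2q z⁴ z⁵`. -/
def Kmat : Matrix (Fin 5) (Fin 5) ℂ :=
  !![1, 0, 0, 0, 0;
     0, 1, 0, 0, 0;
     0, 0, 1, 0, 0;
     0, 0, 0, 0, q;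
     0, 0, 0, q, 0]

/-- The matrix `ρ_τ` of the infinitesimal action of `so(3)` on `ℂ⁵`. -/
def rho (τ₁ τ₂ τ₃ : ℝ) : Matrix (Fin 5) (Fin 5) ℂ :=
  !![0, (τ₃ : ℂ), -(τ₂ : ℂ), -(Real.sqrt 2 : ℂ) * τ₁, -(Real.sqrt 2 : ℂ) * q * τ₁;
     -(τ₃ : ℂ), 0, (τ₁ : ℂ), -(Real.sqrt 2 : ℂ) * (star q) * τ₂, -(Real.sqrt 2 : ℂ) * (star q) * τ₂;
     (τ₂ : ℂ), -(τ₁ : ℂ), 0, -(Real.sqrt 2 : ℂ) * q * τ₃, -(Real.sqrt 2 : ℂ) * τ₃;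
     (Real.sqrt 2 : ℂ) * τ₁, (Real.sqrt 2 : ℂ) * q * τ₂, (Real.sqrt 2 : ℂ) * (star q) * τ₃, 0, 0;
     (Real.sqrt 2 : ℂ) * (star q) * τ₁, (Real.sqrt 2 : ℂ) * q * τ₂, (Real.sqrt 2 : ℂ) * τ₃, 0, 0]

/- AUX -/
lemma qprim : IsPrimitiveRoot q 3 := Complex.isPrimitiveRoot_exp 3 (by norm_num)
lemma hq3 : q*q*q = 1 := by have := qprim.pow_eq_one; rw [pow_succ, pow_succ, pow_one] at this; exact this
lemma hq1 : q ≠ 1 := qprim.ne_one (by norm_num)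
lemma habs : ‖q‖ = 1 := by simp [q, Complex.norm_exp]
lemma hstar : star q = q * q := by
  have h : q * star q = 1 := by
    rw [show (star q) = starRingEnd ℂ q from rfl, Complex.mul_conj]
    norm_cast
    rw [Complex.normSq_eq_norm_sq, habs]; norm_num
  linear_combination q*q*h - star q * hq3
lemma hs6 : (Real.sqrt 6 : ℂ) ≠ 0 := by norm_cast; positivity
lemma hs3 : (Real.sqrt 3 : ℂ) ≠ 0 := by norm_cast; positivity

lemma fin3P {P : Fin 3 → Prop} (h0 : P 0) (h1 : P 1) (h2 : P 2) : ∀ i, P i := by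
  intro i; fin_cases i <;> assumption

lemma ext3 {f g : Tensor3} (h : ∀ i j k : Fin 3, f i j k = g i j k) : f = g :=
  funext fun i => funext fun j => funext fun k => h i j k

lemma Tz_add (z w : Fin 5 → ℂ) : Tz (z + w) = Tz z + Tz w := by
  apply ext3
  apply fin3P <;> apply fin3P <;> apply fin3P <;>
    (simp only [Tz, Matrix.cons_val_zero, Matrix.cons_val_one, Matrix.head_cons,
      Matrix.cons_val_two, Matrix.tail_cons, Pi.add_apply]; ring)

lemma Tz_smul (c : ℂ) (z : Fin 5 → ℂ) : Tz (c • z) = c • Tz z := by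
  apply ext3
  apply fin3P <;> apply fin3P <;> apply fin3P <;>
    (simp only [Tz, Matrix.cons_val_zero, Matrix.cons_val_one, Matrix.head_cons,
      Matrix.cons_val_two, Matrix.tail_cons, Pi.smul_apply, smul_eq_mul]; ring)

lemma Tz_cyclic (z : Fin 5 → ℂ) : ∀ i j k : Fin 3, Tz z i j k = q * Tz z j k i := by
  apply fin3P <;> apply fin3P <;> apply fin3P <;>
    (simp only [Tz, Matrix.cons_val_zero, Matrix.cons_val_one, Matrix.head_cons,
      Matrix.cons_val_two, Matrix.tail_cons, hstar];
     first
       | ring1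
       | linear_combination (z 0 / (Real.sqrt 6 : ℂ)) * hq3
       | linear_combination (-(z 0) / (Real.sqrt 6 : ℂ)) * hq3
       | linear_combination (z 1 / (Real.sqrt 6 : ℂ)) * hq3
       | linear_combination (-(z 1) / (Real.sqrt 6 : ℂ)) * hq3
       | linear_combination (z 2 / (Real.sqrt 6 : ℂ)) * hq3
       | linear_combination (-(z 2) / (Real.sqrt 6 : ℂ)) * hq3
       | linear_combination (z 3 / (Real.sqrt 3 : ℂ)) * hq3
       | linear_combination (-(z 3) / (Real.sqrt 3 : ℂ)) * hq3
       | linear_combination (z 4 / (Real.sqrt 3 : ℂ)) * hq3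
       | linear_combination (-(z 4) / (Real.sqrt 3 : ℂ)) * hq3)

lemma Tz_T1 (z : Fin 5 → ℂ) : CondT1 (Tz z) := by
  apply fin3P <;>
    (refine ⟨?_, ?_, ?_⟩ <;>
      (rw [Fin.sum_univ_three];
       simp only [Tz, Matrix.cons_val_zero, Matrix.cons_val_one, Matrix.head_cons,
         Matrix.cons_val_two, Matrix.tail_cons, hstar];
       ring))

lemma fin5P {P : Fin 5 → Prop} (h0 : P 0) (h1 : P 1) (h2 : P 2) (h3 : P 3) (h4 : P 4) :
    ∀ i, P i := by
  intro i; fin_cases i <;> assumption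

lemma Tz_surj (T : Tensor3) (hT1 : CondT1 T) (hcyc : ∀ i j k : Fin 3, T i j k = q * T j k i) :
    Tz ![(Real.sqrt 6 : ℂ) * T 0 1 1, (Real.sqrt 6 : ℂ) * T 1 2 2, (Real.sqrt 6 : ℂ) * T 2 0 0,
        (Real.sqrt 3 : ℂ) * T 0 1 2, (Real.sqrt 3 : ℂ) * T 2 1 0] = T := by
  have hcyc2 : ∀ i j k : Fin 3, T j k i = q * q * T i j k := fun i j k => by
    linear_combination (-q*q) * (hcyc i j k) - T j k i * hq3
  have hd : ∀ i : Fin 3, T i i i = 0 := by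
    intro i
    have h2 : (1 - q) * T i i i = 0 := by linear_combination hcyc i i i
    rcases mul_eq_zero.mp h2 with h' | h'
    · exact absurd (sub_eq_zero.mp h').symm hq1
    · exact h'
  have t0 : T 0 2 2 = -T 0 1 1 := by
    have h := (hT1 0).2.2; rw [Fin.sum_univ_three] at h; linear_combination h - hd 0
  have t1 : T 1 0 0 = -T 1 2 2 := by
    have h := (hT1 1).2.2; rw [Fin.sum_univ_three] at h; linear_combination h - hd 1
  have t2 : T 2 1 1 = -T 2 0 0 := by
    have h := (hT1 2).2.2; rw [Fin.sum_univ_three] at h; linear_combination h - hd 2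
  have h110 := hcyc2 0 1 1
  have h101 := hcyc 1 0 1
  have h220 := hcyc2 0 2 2
  have h202 := hcyc 2 0 2
  have h221 := hcyc2 1 2 2
  have h212 := hcyc 2 1 2
  have h001 := hcyc2 1 0 0
  have h010 := hcyc 0 1 0
  have h002 := hcyc2 2 0 0
  have h020 := hcyc 0 2 0
  have h112 := hcyc2 2 1 1
  have h121 := hcyc 1 2 1
  have h120 := hcyc2 0 1 2
  have h201 := hcyc 2 0 1
  have h102 := hcyc2 2 1 0
  have h021 := hcyc 0 2 1
  apply ext3
  apply fin3P <;> apply fin3P <;> apply fin3P <;>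
    simp only [Tz, Matrix.cons_val_zero, Matrix.cons_val_one, Matrix.head_cons,
      Matrix.cons_val_two, Matrix.tail_cons, Matrix.cons_val_three, Matrix.cons_val_four,
      hstar, hd, h110, h101, h220, h202, h221, h212, h001, h010, h002, h020, h112, h121,
      h120, h201, h102, h021, t0, t1, t2] <;>
    (first | rfl | (field_simp; ring1) | field_simp)

def Lmap : (Fin 5 → ℂ) →ₗ[ℂ] Tensor3 where
  toFun := Tz
  map_add' := Tz_add
  map_smul' := Tz_smul

lemma Lmap_inj : Function.Injective Lmap := by
  intro z w h
  have h' : Tz z = Tz w := h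
  funext i
  revert i
  apply fin5P
  · have e := congrFun (congrFun (congrFun h' 0) 1) 1
    simp only [Tz, Matrix.cons_val_zero, Matrix.cons_val_one, Matrix.head_cons,
      Matrix.cons_val_two, Matrix.tail_cons] at e
    field_simp at e; exact e
  · have e := congrFun (congrFun (congrFun h' 1) 2) 2
    simp only [Tz, Matrix.cons_val_zero, Matrix.cons_val_one, Matrix.head_cons,
      Matrix.cons_val_two, Matrix.tail_cons] at e
    field_simp at e; exact e
  · have e := congrFun (congrFun (congrFun h' 2) 0) 0
    simp only [Tz, Matrix.cons_val_zero, Matrix.cons_val_one, Matrix.head_cons,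
      Matrix.cons_val_two, Matrix.tail_cons] at e
    field_simp at e; exact e
  · have e := congrFun (congrFun (congrFun h' 0) 1) 2
    simp only [Tz, Matrix.cons_val_zero, Matrix.cons_val_one, Matrix.head_cons,
      Matrix.cons_val_two, Matrix.tail_cons] at e
    field_simp at e; exact e
  · have e := congrFun (congrFun (congrFun h' 2) 1) 0
    simp only [Tz, Matrix.cons_val_zero, Matrix.cons_val_one, Matrix.head_cons,
      Matrix.cons_val_two, Matrix.tail_cons] at e
    field_simp at e; exact e

/-- `z ↦ T(z)` is an injective linear map whose range is the
space of tensors satisfying T1 and `T_{ijk} = q·T_{jki}`, a space of complex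
dimension 5. -/
theorem Tz_linear_injective_range :
    ∃ L : (Fin 5 → ℂ) →ₗ[ℂ] Tensor3,
      (∀ z, L z = Tz z) ∧ Function.Injective L ∧
      ((LinearMap.range L : Set Tensor3) =
        {T : Tensor3 | CondT1 T ∧ ∀ i j k : Fin 3, T i j k = q * T j k i}) ∧
      Module.finrank ℂ (LinearMap.range L) = 5 := by
  refine ⟨Lmap, fun z => rfl, Lmap_inj, ?_, ?_⟩
  · ext T
    simp only [SetLike.mem_coe, LinearMap.mem_range, Set.mem_setOf_eq]
    constructor
    · rintro ⟨z, rfl⟩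
      exact ⟨Tz_T1 z, Tz_cyclic z⟩
    · rintro ⟨h1, h2⟩
      exact ⟨_, Tz_surj T h1 h2⟩
  · rw [LinearMap.finrank_range_of_inj Lmap_inj]
    exact Module.finrank_fin_fun ℂ

end
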